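/- arXiv:0909.2120 — 2 statements merged into one kernel-verified Lean document; each statement's English description precedes it below -/
import Mathlib

section
/- Let d ≥ 2, N ≥ 1, 0 ≤ M ≤ N, and let μ^{N,M} be the random probability measure of the sparse random construction. For k = 1,…,N let h_k := (1/log d) · E[ H(ν_k) ], where ν_k is the image of μ^{N,M} under the projection of Λ_{d,N} onto the first k coordinates. Then: (i) for 1 ≤ k ≤ M, k − 2 d^{(k−M)/2} ≤ h_k ≤ k; (ii) for M < k ≤ N, M − d^{M−k} ≤ h_k ≤ M. -/
open Filter

noncomputable def entropy {α : Type*} [Fintype α] (p : α → ℝ) : ℝ :=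
  -∑ x, p x * Real.log (p x)

def IsPMF {α : Type*} [Fintype α] (p : α → ℝ) : Prop :=
  (∀ x, 0 ≤ p x) ∧ ∑ x, p x = 1

noncomputable def margin {d N : ℕ} (μ : (Fin N → Fin d) → ℝ) (S : Finset (Fin N)) :
    (({ i // i ∈ S }) → Fin d) → ℝ :=
  fun y => ∑ x : Fin N → Fin d, if ∀ i : { i // i ∈ S }, x i.1 = y i then μ x else 0

/-- Mutual information between `X_S` and `X_{Sᶜ}`. -/
noncomputable def MIS {d N : ℕ} (μ : (Fin N → Fin d) → ℝ) (S : Finset (Fin N)) : ℝ :=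
  entropy (margin μ S) + entropy (margin μ Sᶜ) - entropy μ

/-- The Edelman–Sporns–Tononi neural complexity. -/
noncomputable def neural {d N : ℕ} (μ : (Fin N → Fin d) → ℝ) : ℝ :=
  (1 / (N + 1 : ℝ)) * ∑ S : Finset (Fin N), (1 / (N.choose S.card : ℝ)) * MIS μ S

noncomputable def avgEntropy {d N : ℕ} (μ : (Fin N → Fin d) → ℝ) (k : ℕ) : ℝ :=
  (1 / (N.choose k : ℝ)) *
    ∑ S ∈ Finset.powersetCard k (Finset.univ : Finset (Fin N)), entropy (margin μ S)

/-- The entropy profile `h_X : [0,1] → [0,1]`, piecewise affine interpolation of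
`k/N ↦ (average entropy of subsystems of size k)/(N log d)`. -/
noncomputable def profile {d N : ℕ} (μ : (Fin N → Fin d) → ℝ) (t : ℝ) : ℝ :=
  if t ≤ 0 then 0 else
    (avgEntropy μ (⌈t * N⌉.toNat - 1)
      + (t * N - ((⌈t * N⌉.toNat - 1 : ℕ) : ℝ)) *
        (avgEntropy μ ⌈t * N⌉.toNat - avgEntropy μ (⌈t * N⌉.toNat - 1)))
      / (N * Real.log d)

open MeasureTheory ProbabilityTheory

/-- The (random) empirical measure `μ^{N,M}` of the sparse random construction:
`μ^{N,M}(v) = d^{−M} ∑_{i ∈ Λ_{d,M}} 1{v = w_i}`. -/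
noncomputable def sparseMu (d : ℕ) {M N : ℕ} (w : (Fin M → Fin d) → (Fin N → Fin d)) :
    (Fin N → Fin d) → ℝ :=
  fun v => ((Finset.univ.filter (fun i : Fin M → Fin d => w i = v)).card : ℝ) / (d ^ M : ℝ)

section Aux

/-- pointwise inequality for the dense case -/
lemma ineqA (n m x : ℝ) (hn : 0 < n) (hm : 0 < m) (hx : 0 ≤ x) :
    x * (Real.log n - Real.log m + 1) - (n / m) * x ^ 2 ≤ -(x * Real.log x) := by
  rcases eq_or_lt_of_le hx with h | h
  · simp [← h]
  · have h1 : Real.log (x * n / m) ≤ x * n / m - 1 :=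
      Real.log_le_sub_one_of_pos (by positivity)
    have h2 : Real.log (x * n / m) = Real.log x + Real.log n - Real.log m := by
      rw [Real.log_div (by positivity) (by positivity), Real.log_mul (ne_of_gt h) (ne_of_gt hn)]
    have h3 : Real.log x ≤ x * n / m - 1 - Real.log n + Real.log m := by linarith
    have h4 : x * Real.log x ≤ x * (x * n / m - 1 - Real.log n + Real.log m) :=
      mul_le_mul_of_nonneg_left h3 hx
    have h5 : x * (x * n / m) = (n / m) * x ^ 2 := by ring
    nlinarith

lemma nat_le_two_pow (c : ℕ) : (c : ℝ) ≤ 2 ^ (c - 1) := by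
  rcases Nat.eq_zero_or_pos c with h | h
  · simp [h]
  · have : c - 1 < 2 ^ (c - 1) := Nat.lt_two_pow_self
    have : c ≤ 2 ^ (c - 1) := by omega
    exact_mod_cast Nat.cast_le.mpr this

/-- pointwise inequality for the sparse case; `x = c/n` with `c` natural -/
lemma ineqB (n : ℝ) (c : ℕ) (hn : 0 < n) :
    ((c : ℝ) / n) * Real.log n + Real.log 2 * ((c / n) - n * (c / n) ^ 2) ≤
      -((c / n) * Real.log ((c : ℝ) / n)) := by
  rcases Nat.eq_zero_or_pos c with h | h
  · simp [h]
  · have hc : (0 : ℝ) < c := by exact_mod_cast h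
    have hlogc : Real.log c ≤ (c - 1) * Real.log 2 := by
      have h1 : Real.log c ≤ Real.log ((2 : ℝ) ^ (c - 1)) :=
        Real.log_le_log hc (nat_le_two_pow c)
      rw [Real.log_pow] at h1
      have h2 : ((c - 1 : ℕ) : ℝ) = (c : ℝ) - 1 := by
        have : 1 ≤ c := h
        push_cast [this]; ring
      rw [h2] at h1
      linarith
    have hlog : Real.log ((c : ℝ) / n) = Real.log c - Real.log n :=
      Real.log_div (ne_of_gt hc) (ne_of_gt hn)
    have hx : (0 : ℝ) < c / n := by positivity
    have key : n * ((c : ℝ) / n) ^ 2 = (c / n) * c := by field_simp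
    rw [hlog, key]
    have h2 : (c / n) * Real.log c ≤ (c / n) * ((c - 1) * Real.log 2) :=
      mul_le_mul_of_nonneg_left hlogc (le_of_lt hx)
    nlinarith [h2]

lemma entropy_le_log_card {α : Type*} [Fintype α] (q : α → ℝ) (h0 : ∀ x, 0 ≤ q x)
    (h1 : ∑ x, q x = 1) (S : Finset α) (hS : ∀ x, x ∉ S → q x = 0) :
    entropy q ≤ Real.log S.card := by
  classical
  set T := S.filter (fun x => 0 < q x) with hT
  have hmemT : ∀ x, x ∉ T → q x = 0 := by
    intro x hx
    rcases (h0 x).eq_or_lt with h | h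
    · exact h.symm
    · exfalso; apply hx; simp only [hT, Finset.mem_filter]
      refine ⟨?_, h⟩
      by_contra hxS
      exact absurd (hS x hxS) (ne_of_gt h)
  have hsumT : ∑ x ∈ T, q x = 1 := by
    rw [Finset.sum_subset (Finset.subset_univ T) (fun x _ hx => hmemT x hx)]
    exact h1
  have hent : entropy q = ∑ x ∈ T, q x * Real.log (q x)⁻¹ := by
    unfold entropy
    rw [← Finset.sum_subset (Finset.subset_univ T)
      (fun x _ hx => by rw [hmemT x hx]; simp)]
    rw [← Finset.sum_neg_distrib]
    refine Finset.sum_congr rfl fun x hx => ?_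
    rw [Real.log_inv]; ring
  rw [hent]
  have hTpos : ∀ x ∈ T, 0 < q x := fun x hx => (Finset.mem_filter.mp hx).2
  have jensen : ∑ x ∈ T, q x • Real.log (q x)⁻¹ ≤ Real.log (∑ x ∈ T, q x • (q x)⁻¹) := by
    apply (strictConcaveOn_log_Ioi.concaveOn).le_map_sum
    · exact fun x hx => le_of_lt (hTpos x hx)
    · exact hsumT
    · intro x hx
      exact Set.mem_Ioi.mpr (inv_pos.mpr (hTpos x hx))
  have hsum_inv : ∑ x ∈ T, q x • (q x)⁻¹ = (T.card : ℝ) := by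
    rw [Finset.card_eq_sum_ones T]
    push_cast
    refine Finset.sum_congr rfl fun x hx => ?_
    simp [smul_eq_mul, mul_inv_cancel₀ (ne_of_gt (hTpos x hx))]
  simp only [smul_eq_mul] at jensen hsum_inv
  rw [hsum_inv] at jensen
  refine jensen.trans ?_
  have hcard : (T.card : ℝ) ≤ (S.card : ℝ) := by
    exact_mod_cast Finset.card_le_card (Finset.filter_subset _ S)
  rcases Nat.eq_zero_or_pos T.card with h | h
  · exfalso
    have : T = ∅ := Finset.card_eq_zero.mp h
    rw [this] at hsumT; simp at hsumT
  · exact Real.log_le_log (by exact_mod_cast h) hcard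

lemma card_fiber (d N k : ℕ) (hk : k ≤ N) (y : Fin k → Fin d) :
    (Finset.univ.filter
      (fun v : Fin N → Fin d => ∀ j : Fin k, v (Fin.castLE hk j) = y j)).card = d ^ (N - k) := by
  classical
  have hcard : (Finset.univ : Finset (Fin (N - k) → Fin d)).card = d ^ (N - k) := by
    simp [Finset.card_univ, Fintype.card_fun]
  rw [← hcard]
  apply Finset.card_bij' (fun v _ => fun t : Fin (N - k) => v ⟨k + t.1, by omega⟩)
    (fun g _ => fun idx : Fin N => if h : idx.1 < k then y ⟨idx.1, h⟩ else g ⟨idx.1 - k, by omega⟩)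
  case hi => intro v hv; exact Finset.mem_univ _
  case hj =>
    intro g hg
    simp only [Finset.mem_filter, Finset.mem_univ, true_and]
    intro j
    simp [Fin.castLE, j.2]
  case left_inv =>
    intro v hv
    simp only [Finset.mem_filter, Finset.mem_univ, true_and] at hv
    funext idx
    by_cases h : idx.1 < k
    · simp only [h, dif_pos]
      have := hv ⟨idx.1, h⟩
      simpa [Fin.castLE] using this.symm
    · simp only [h, dif_neg, not_false_iff]
      congr 1
      ext
      simp; omega
  case right_inv =>
    intro g hg
    funext t
    have h : ¬ (k + t.1 < k) := by omega
    simp only [h, dif_neg, not_false_iff]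
    congr 1
    ext
    simp

lemma nu_eq (d N M k : ℕ) (hk : k ≤ N) (w : (Fin M → Fin d) → (Fin N → Fin d))
    (y : Fin k → Fin d) :
    (∑ v : Fin N → Fin d, if ∀ j : Fin k, v (Fin.castLE hk j) = y j then sparseMu d w v else 0)
      = (∑ i : Fin M → Fin d,
          if ∀ j : Fin k, w i (Fin.castLE hk j) = y j then (1:ℝ) else 0) / (d ^ M : ℝ) := by
  classical
  unfold sparseMu
  have step1 : ∀ v : Fin N → Fin d,
      (if ∀ j : Fin k, v (Fin.castLE hk j) = y j
        then ((Finset.univ.filter (fun i : Fin M → Fin d => w i = v)).card : ℝ) / (d ^ M : ℝ)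
        else 0)
      = (if ∀ j : Fin k, v (Fin.castLE hk j) = y j
        then ((Finset.univ.filter (fun i : Fin M → Fin d => w i = v)).card : ℝ) else 0)
          / (d ^ M : ℝ) := by
    intro v; split <;> simp
  rw [Finset.sum_congr rfl (fun v _ => step1 v), ← Finset.sum_div]
  congr 1
  rw [Finset.sum_boole]
  have hfib : (Finset.univ.filter (fun i : Fin M → Fin d =>
      ∀ j : Fin k, w i (Fin.castLE hk j) = y j)).card
      = ∑ v ∈ Finset.univ.filter (fun v : Fin N → Fin d =>
          ∀ j : Fin k, v (Fin.castLE hk j) = y j),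
        ((Finset.univ.filter (fun i : Fin M → Fin d =>
          ∀ j : Fin k, w i (Fin.castLE hk j) = y j)).filter (fun i => w i = v)).card := by
    apply Finset.card_eq_sum_card_fiberwise
    intro i hi
    simp only [Finset.mem_coe, Finset.mem_filter, Finset.mem_univ, true_and] at hi ⊢
    exact hi
  have hfib2 : ∀ v ∈ Finset.univ.filter (fun v : Fin N → Fin d =>
      ∀ j : Fin k, v (Fin.castLE hk j) = y j),
      ((Finset.univ.filter (fun i : Fin M → Fin d =>
        ∀ j : Fin k, w i (Fin.castLE hk j) = y j)).filter (fun i => w i = v)).card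
      = (Finset.univ.filter (fun i : Fin M → Fin d => w i = v)).card := by
    intro v hv
    simp only [Finset.mem_filter, Finset.mem_univ, true_and] at hv
    congr 1
    ext i
    simp only [Finset.mem_filter, Finset.mem_univ, true_and]
    constructor
    · rintro ⟨_, h2⟩; exact h2
    · intro h; exact ⟨by rw [h]; exact hv, h⟩
  rw [Finset.sum_congr rfl hfib2] at hfib
  rw [← Finset.sum_filter]
  exact_mod_cast hfib.symm

end Aux

set_option maxHeartbeats 2000000 in
/-- for the sparse random construction with `0 ≤ M ≤ N`, letting
`h_k = (1/log d) E[H(ν_k)]` where `ν_k` is the marginal of `μ^{N,M}` on the first `k`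
coordinates: (i) `k − 2 d^{(k−M)/2} ≤ h_k ≤ k` for `1 ≤ k ≤ M`;
(ii) `M − d^{M−k} ≤ h_k ≤ M` for `M < k ≤ N`. -/
theorem stmt15 (d N M : ℕ) (hd : 2 ≤ d) (hN : 1 ≤ N) (hM : M ≤ N)
    (Ω : Type*) [MeasurableSpace Ω] (P : Measure Ω) [IsProbabilityMeasure P]
    (W : (Fin M → Fin d) → Ω → (Fin N → Fin d))
    (hmeas : ∀ i, Measurable (W i))
    (hiid : iIndepFun W P)
    (hunif : ∀ i (v : Fin N → Fin d), P {ω | W i ω = v} = ((d : ENNReal) ^ N)⁻¹) :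
    ∀ k : ℕ, 1 ≤ k → ∀ hk : k ≤ N,
      (k ≤ M →
        (k : ℝ) - 2 * (d : ℝ) ^ (((k : ℝ) - M) / 2) ≤
          (1 / Real.log d) * ∫ ω, entropy (fun y : Fin k → Fin d =>
            ∑ v : Fin N → Fin d,
              if ∀ j : Fin k, v (Fin.castLE hk j) = y j
              then sparseMu d (fun i => W i ω) v else 0) ∂P ∧
        (1 / Real.log d) * ∫ ω, entropy (fun y : Fin k → Fin d =>
            ∑ v : Fin N → Fin d,
              if ∀ j : Fin k, v (Fin.castLE hk j) = y j
              then sparseMu d (fun i => W i ω) v else 0) ∂P ≤ (k : ℝ)) ∧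
      (M < k →
        (M : ℝ) - (d : ℝ) ^ ((M : ℝ) - k) ≤
          (1 / Real.log d) * ∫ ω, entropy (fun y : Fin k → Fin d =>
            ∑ v : Fin N → Fin d,
              if ∀ j : Fin k, v (Fin.castLE hk j) = y j
              then sparseMu d (fun i => W i ω) v else 0) ∂P ∧
        (1 / Real.log d) * ∫ ω, entropy (fun y : Fin k → Fin d =>
            ∑ v : Fin N → Fin d,
              if ∀ j : Fin k, v (Fin.castLE hk j) = y j
              then sparseMu d (fun i => W i ω) v else 0) ∂P ≤ (M : ℝ)) := by
  
  classical
  intro k hk1 hk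
  have hd1R : (1:ℝ) < d := by exact_mod_cast hd
  have hd0R : (0:ℝ) < d := lt_trans zero_lt_one hd1R
  have hlogd : 0 < Real.log d := Real.log_pos hd1R
  have hlog2d : Real.log 2 ≤ Real.log d := Real.log_le_log (by norm_num) (by exact_mod_cast hd)
  set D : ℝ := (d:ℝ) ^ M with hD
  set p : ℝ := ((d:ℝ) ^ k)⁻¹ with hp
  have hD0 : (0:ℝ) < D := by positivity
  have hp0 : (0:ℝ) < p := by positivity
  -- integrability of any function of the sample
  have hInt : ∀ F : ((Fin M → Fin d) → Fin N → Fin d) → ℝ,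
      Integrable (fun ω => F (fun i => W i ω)) P := by
    intro F
    have hg : Measurable (fun ω => (fun i => W i ω) : Ω → ((Fin M → Fin d) → Fin N → Fin d)) :=
      measurable_pi_lambda _ hmeas
    have hF : Measurable F := measurable_of_countable F
    have hcomp : Measurable (fun ω => F (fun i => W i ω)) := hF.comp hg
    obtain ⟨C, hC⟩ : ∃ C : ℝ, ∀ g : ((Fin M → Fin d) → Fin N → Fin d), ‖F g‖ ≤ C := by
      refine ⟨∑ g : ((Fin M → Fin d) → Fin N → Fin d), ‖F g‖, fun g => ?_⟩
      exact Finset.single_le_sum (fun g _ => norm_nonneg (F g)) (Finset.mem_univ g)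
    exact (integrable_const C).mono' hcomp.aestronglyMeasurable (ae_of_all _ (fun ω => hC _))
  -- the probability of one projection event
  have hPA : ∀ (i : Fin M → Fin d) (y : Fin k → Fin d),
      P {ω | ∀ j : Fin k, W i ω (Fin.castLE hk j) = y j}
        = (d : ENNReal) ^ (N - k) * ((d : ENNReal) ^ N)⁻¹ := by
    intro i y
    set SyF : Finset (Fin N → Fin d) :=
      Finset.univ.filter (fun v => ∀ j : Fin k, v (Fin.castLE hk j) = y j) with hSyF
    have hset : {ω | ∀ j : Fin k, W i ω (Fin.castLE hk j) = y j}
        = ⋃ v ∈ SyF, {ω | W i ω = v} := by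
      ext ω
      simp only [Set.mem_setOf_eq, Set.mem_iUnion, hSyF, Finset.mem_filter, Finset.mem_univ,
        true_and, exists_prop]
      constructor
      · intro h
        exact ⟨W i ω, fun j => h j, rfl⟩
      · rintro ⟨v, hv, hvw⟩ j
        rw [hvw]; exact hv j
    rw [hset]
    rw [measure_biUnion_finset]
    · rw [Finset.sum_congr rfl (fun v _ => hunif i v)]
      rw [Finset.sum_const, nsmul_eq_mul]
      congr 1
      have hcf := card_fiber d N k hk y
      rw [← hSyF] at hcf
      rw [hcf]
      push_cast
      ring
    · intro v hv v' hv' hne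
      simp only [Function.onFun]
      apply Set.disjoint_left.mpr
      intro ω h1 h2
      simp only [Set.mem_setOf_eq] at h1 h2
      exact hne (h1 ▸ h2 ▸ rfl)
    · intro v hv
      have : {ω | W i ω = v} = (W i) ⁻¹' {v} := rfl
      rw [this]
      exact (hmeas i) (MeasurableSet.of_discrete)
  have hvalPA : ((d : ENNReal) ^ (N - k) * ((d : ENNReal) ^ N)⁻¹).toReal = p := by
    rw [ENNReal.toReal_mul, ENNReal.toReal_inv, ENNReal.toReal_pow, ENNReal.toReal_pow,
      ENNReal.toReal_natCast]
    rw [hp, show N = (N - k) + k by omega, pow_add]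
    field_simp
    rw [Nat.add_sub_cancel]
  -- first moments
  have hint1 : ∀ (i : Fin M → Fin d) (y : Fin k → Fin d),
      ∫ ω, (if ∀ j' : Fin k, W i ω (Fin.castLE hk j') = y j' then (1:ℝ) else 0) ∂P = p := by
    intro i y
    have heq : (fun ω => (if ∀ j' : Fin k, W i ω (Fin.castLE hk j') = y j' then (1:ℝ) else 0))
        = Set.indicator {ω | ∀ j' : Fin k, W i ω (Fin.castLE hk j') = y j'}
            (fun _ => (1:ℝ)) := by
      funext ω
      by_cases h : ∀ j' : Fin k, W i ω (Fin.castLE hk j') = y j' <;>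
        simp [Set.indicator_apply, h]
    have hms : MeasurableSet {ω | ∀ j' : Fin k, W i ω (Fin.castLE hk j') = y j'} := by
      have : {ω | ∀ j' : Fin k, W i ω (Fin.castLE hk j') = y j'}
          = (W i) ⁻¹' {v | ∀ j' : Fin k, v (Fin.castLE hk j') = y j'} := rfl
      rw [this]
      exact (hmeas i) MeasurableSet.of_discrete
    rw [heq, integral_indicator_const (1:ℝ) hms, measureReal_def, hPA i y, smul_eq_mul, mul_one, hvalPA]
  -- second moments, off diagonal
  have hint2 : ∀ (y : Fin k → Fin d) (i j : Fin M → Fin d), i ≠ j →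
      ∫ ω, (if ∀ j' : Fin k, W i ω (Fin.castLE hk j') = y j' then (1:ℝ) else 0)
        * (if ∀ j' : Fin k, W j ω (Fin.castLE hk j') = y j' then (1:ℝ) else 0) ∂P = p ^ 2 := by
    intro y i j hne
    set S : Set (Fin N → Fin d) := {v | ∀ j' : Fin k, v (Fin.castLE hk j') = y j'} with hS
    have hind : P ((W i) ⁻¹' S ∩ (W j) ⁻¹' S) = P ((W i) ⁻¹' S) * P ((W j) ⁻¹' S) :=
      (hiid.indepFun hne).measure_inter_preimage_eq_mul S S
        MeasurableSet.of_discrete MeasurableSet.of_discrete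
    have heq : (fun ω => (if ∀ j' : Fin k, W i ω (Fin.castLE hk j') = y j' then (1:ℝ) else 0)
        * (if ∀ j' : Fin k, W j ω (Fin.castLE hk j') = y j' then (1:ℝ) else 0))
        = Set.indicator ((W i) ⁻¹' S ∩ (W j) ⁻¹' S) (fun _ => (1:ℝ)) := by
      funext ω
      by_cases h1 : ∀ j' : Fin k, W i ω (Fin.castLE hk j') = y j' <;>
        by_cases h2 : ∀ j' : Fin k, W j ω (Fin.castLE hk j') = y j' <;>
        simp [Set.indicator_apply, Set.mem_inter_iff, hS, Set.mem_preimage, Set.mem_setOf_eq,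
          h1, h2]
    rw [heq, integral_indicator_const (1:ℝ) (MeasurableSet.inter
      ((hmeas i) MeasurableSet.of_discrete) ((hmeas j) MeasurableSet.of_discrete))]
    rw [measureReal_def, hind]
    have hAi : (W i) ⁻¹' S = {ω | ∀ j' : Fin k, W i ω (Fin.castLE hk j') = y j'} := rfl
    have hAj : (W j) ⁻¹' S = {ω | ∀ j' : Fin k, W j ω (Fin.castLE hk j') = y j'} := rfl
    rw [hAi, hAj, hPA i y, hPA j y]
    rw [ENNReal.toReal_mul, smul_eq_mul, mul_one, hvalPA]
    ring
  
  -- the normalized empirical marginal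
  set νf : Ω → (Fin k → Fin d) → ℝ := fun ω y =>
    (∑ i : Fin M → Fin d,
      if ∀ j' : Fin k, W i ω (Fin.castLE hk j') = y j' then (1:ℝ) else 0) / D with hνf
  have hIntf : ∀ (y : Fin k → Fin d) (i : Fin M → Fin d),
      Integrable (fun ω =>
        (if ∀ j' : Fin k, W i ω (Fin.castLE hk j') = y j' then (1:ℝ) else 0)) P :=
    fun y i => hInt (fun g =>
      (if ∀ j' : Fin k, g i (Fin.castLE hk j') = y j' then (1:ℝ) else 0))
  have hIntprod : ∀ (y : Fin k → Fin d) (i j : Fin M → Fin d),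
      Integrable (fun ω =>
        (if ∀ j' : Fin k, W i ω (Fin.castLE hk j') = y j' then (1:ℝ) else 0)
        * (if ∀ j' : Fin k, W j ω (Fin.castLE hk j') = y j' then (1:ℝ) else 0)) P :=
    fun y i j => hInt (fun g =>
      (if ∀ j' : Fin k, g i (Fin.castLE hk j') = y j' then (1:ℝ) else 0)
      * (if ∀ j' : Fin k, g j (Fin.castLE hk j') = y j' then (1:ℝ) else 0))
  have hIntν : ∀ y : Fin k → Fin d, Integrable (fun ω => νf ω y) P :=
    fun y => hInt (fun g =>
      (∑ i : Fin M → Fin d,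
        if ∀ j' : Fin k, g i (Fin.castLE hk j') = y j' then (1:ℝ) else 0) / D)
  have hIntν2 : ∀ y : Fin k → Fin d, Integrable (fun ω => (νf ω y) ^ 2) P :=
    fun y => hInt (fun g =>
      ((∑ i : Fin M → Fin d,
        if ∀ j' : Fin k, g i (Fin.castLE hk j') = y j' then (1:ℝ) else 0) / D) ^ 2)
  have hIntnl : ∀ y : Fin k → Fin d,
      Integrable (fun ω => -(νf ω y * Real.log (νf ω y))) P :=
    fun y => hInt (fun g =>
      -(((∑ i : Fin M → Fin d,
        if ∀ j' : Fin k, g i (Fin.castLE hk j') = y j' then (1:ℝ) else 0) / D)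
        * Real.log ((∑ i : Fin M → Fin d,
        if ∀ j' : Fin k, g i (Fin.castLE hk j') = y j' then (1:ℝ) else 0) / D)))
  have hcardI : ((Finset.univ : Finset (Fin M → Fin d)).card : ℝ) = D := by
    rw [hD]
    simp [Finset.card_univ, Fintype.card_fun]
  have hcardY : ((Finset.univ : Finset (Fin k → Fin d)).card : ℝ) = (d:ℝ) ^ k := by
    simp [Finset.card_univ, Fintype.card_fun]
  -- first moment of the marginal mass
  have hS1 : ∀ y : Fin k → Fin d, ∫ ω, νf ω y ∂P = p := by
    intro y
    simp only [hνf]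
    rw [integral_div, integral_finset_sum _ (fun i _ => hIntf y i),
      Finset.sum_congr rfl (fun i _ => hint1 i y), Finset.sum_const, nsmul_eq_mul, hcardI]
    field_simp
  -- second moment bound
  have hS2 : ∀ y : Fin k → Fin d, ∫ ω, (νf ω y) ^ 2 ∂P ≤ p / D + p ^ 2 := by
    intro y
    have hexp : (fun ω => (νf ω y) ^ 2) = fun ω =>
        (∑ i : Fin M → Fin d, ∑ j : Fin M → Fin d,
          (if ∀ j' : Fin k, W i ω (Fin.castLE hk j') = y j' then (1:ℝ) else 0)
          * (if ∀ j' : Fin k, W j ω (Fin.castLE hk j') = y j' then (1:ℝ) else 0)) / D ^ 2 := by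
      funext ω
      simp only [hνf]
      rw [div_pow, sq, Finset.sum_mul_sum]
    rw [hexp, integral_div]
    rw [integral_finset_sum _ (fun i _ => integrable_finset_sum _ (fun j _ => hIntprod y i j))]
    rw [Finset.sum_congr rfl (fun i _ =>
      integral_finset_sum _ (fun j _ => hIntprod y i j))]
    have hbound : ∀ i j : Fin M → Fin d,
        ∫ ω, (if ∀ j' : Fin k, W i ω (Fin.castLE hk j') = y j' then (1:ℝ) else 0)
          * (if ∀ j' : Fin k, W j ω (Fin.castLE hk j') = y j' then (1:ℝ) else 0) ∂P
        ≤ p ^ 2 + (if i = j then p else 0) := by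
      intro i j
      by_cases h : i = j
      · subst h
        have hsq : (fun ω =>
            (if ∀ j' : Fin k, W i ω (Fin.castLE hk j') = y j' then (1:ℝ) else 0)
            * (if ∀ j' : Fin k, W i ω (Fin.castLE hk j') = y j' then (1:ℝ) else 0))
            = fun ω => (if ∀ j' : Fin k, W i ω (Fin.castLE hk j') = y j' then (1:ℝ) else 0) := by
          funext ω
          by_cases h' : ∀ j' : Fin k, W i ω (Fin.castLE hk j') = y j' <;> simp [h']
        rw [hsq, hint1 i y]
        simp [le_add_iff_nonneg_left, sq_nonneg]
      · rw [hint2 y i j h]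
        simp [h]
    have hsum : (∑ i : Fin M → Fin d, ∑ j : Fin M → Fin d,
        ∫ ω, (if ∀ j' : Fin k, W i ω (Fin.castLE hk j') = y j' then (1:ℝ) else 0)
          * (if ∀ j' : Fin k, W j ω (Fin.castLE hk j') = y j' then (1:ℝ) else 0) ∂P)
        ≤ D ^ 2 * p ^ 2 + D * p := by
      calc (∑ i : Fin M → Fin d, ∑ j : Fin M → Fin d,
          ∫ ω, (if ∀ j' : Fin k, W i ω (Fin.castLE hk j') = y j' then (1:ℝ) else 0)
            * (if ∀ j' : Fin k, W j ω (Fin.castLE hk j') = y j' then (1:ℝ) else 0) ∂P)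
          ≤ ∑ i : Fin M → Fin d, ∑ j : Fin M → Fin d, (p ^ 2 + (if i = j then p else 0)) := by
            refine Finset.sum_le_sum (fun i _ => Finset.sum_le_sum (fun j _ => hbound i j))
        _ = D ^ 2 * p ^ 2 + D * p := by
            simp only [Finset.sum_add_distrib, Finset.sum_const, nsmul_eq_mul]
            rw [Finset.sum_congr rfl (fun i (_ : i ∈ Finset.univ) =>
              Finset.sum_ite_eq (Finset.univ : Finset (Fin M → Fin d)) i (fun _ => p))]
            simp only [Finset.mem_univ, if_true, Finset.sum_const, nsmul_eq_mul, hcardI]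
            ring
    have hD2 : (0:ℝ) < D ^ 2 := by positivity
    calc (∑ i : Fin M → Fin d, ∑ j : Fin M → Fin d,
        ∫ ω, (if ∀ j' : Fin k, W i ω (Fin.castLE hk j') = y j' then (1:ℝ) else 0)
          * (if ∀ j' : Fin k, W j ω (Fin.castLE hk j') = y j' then (1:ℝ) else 0) ∂P) / D ^ 2
        ≤ (D ^ 2 * p ^ 2 + D * p) / D ^ 2 := by
          exact div_le_div_of_nonneg_right hsum (le_of_lt hD2)
      _ = p / D + p ^ 2 := by field_simp; ring
  -- the marginal is a PMF
  have hnonneg : ∀ ω (y : Fin k → Fin d), 0 ≤ νf ω y := by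
    intro ω y
    simp only [hνf]
    apply div_nonneg _ (le_of_lt hD0)
    apply Finset.sum_nonneg
    intro i _
    split <;> norm_num
  have hsum1 : ∀ ω, ∑ y : Fin k → Fin d, νf ω y = 1 := by
    intro ω
    simp only [hνf]
    rw [← Finset.sum_div, Finset.sum_comm]
    have hone : ∀ i : Fin M → Fin d, (∑ y : Fin k → Fin d,
        if ∀ j' : Fin k, W i ω (Fin.castLE hk j') = y j' then (1:ℝ) else 0) = 1 := by
      intro i
      have hcond : ∀ y : Fin k → Fin d,
          (∀ j' : Fin k, W i ω (Fin.castLE hk j') = y j')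
            ↔ ((fun j' : Fin k => W i ω (Fin.castLE hk j')) = y) := by
        intro y
        rw [funext_iff]
      simp only [hcond]
      rw [Finset.sum_ite_eq (Finset.univ : Finset (Fin k → Fin d))
        (fun j' : Fin k => W i ω (Fin.castLE hk j')) (fun _ => (1:ℝ))]
      simp
    rw [Finset.sum_congr rfl (fun i _ => hone i), Finset.sum_const, nsmul_eq_mul, hcardI]
    field_simp
  have hNat : ∀ ω (y : Fin k → Fin d), ∃ c : ℕ, νf ω y = (c : ℝ) / D := by
    intro ω y
    refine ⟨(Finset.univ.filter (fun i : Fin M → Fin d =>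
      ∀ j' : Fin k, W i ω (Fin.castLE hk j') = y j')).card, ?_⟩
    simp only [hνf]
    congr 1
    rw [Finset.sum_boole]
  
  -- identify the goal integral
  set E : ℝ := ∫ ω, entropy (fun y : Fin k → Fin d =>
    ∑ v : Fin N → Fin d,
      if ∀ j : Fin k, v (Fin.castLE hk j) = y j
      then sparseMu d (fun i => W i ω) v else 0) ∂P with hE
  have hform : (fun ω => entropy (fun y : Fin k → Fin d =>
      ∑ v : Fin N → Fin d,
        if ∀ j : Fin k, v (Fin.castLE hk j) = y j
        then sparseMu d (fun i => W i ω) v else 0))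
      = fun ω => entropy (νf ω) := by
    funext ω
    congr 1
    funext y
    rw [nu_eq d N M k hk (fun i => W i ω) y]
  have hEform : E = ∫ ω, entropy (νf ω) ∂P := by
    rw [hE, hform]
  have hIntE : Integrable (fun ω => entropy (νf ω)) P := by
    rw [← hform]
    exact hInt (fun g => entropy (fun y : Fin k → Fin d =>
      ∑ v : Fin N → Fin d,
        if ∀ j : Fin k, v (Fin.castLE hk j) = y j
        then sparseMu d g v else 0))
  have hEν : E = ∑ y : Fin k → Fin d, ∫ ω, -(νf ω y * Real.log (νf ω y)) ∂P := by
    rw [hEform]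
    have h1 : (fun ω => entropy (νf ω))
        = fun ω => ∑ y : Fin k → Fin d, -(νf ω y * Real.log (νf ω y)) := by
      funext ω
      rw [entropy, ← Finset.sum_neg_distrib]
    rw [h1]
    exact integral_finset_sum _ (fun y _ => hIntnl y)
  -- upper bounds
  have hEup : ∀ c : ℝ, (∀ ω, entropy (νf ω) ≤ c) → E ≤ c := by
    intro c hc
    rw [hEform]
    calc ∫ ω, entropy (νf ω) ∂P ≤ ∫ _ω, c ∂P :=
          integral_mono hIntE (integrable_const c) hc
      _ = c := by simp
  have hub1 : ∀ ω, entropy (νf ω) ≤ (k:ℝ) * Real.log d := by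
    intro ω
    have h := entropy_le_log_card (νf ω) (hnonneg ω) (hsum1 ω)
      (Finset.univ : Finset (Fin k → Fin d)) (fun x hx => absurd (Finset.mem_univ x) hx)
    rw [hcardY, Real.log_pow] at h
    exact_mod_cast h
  have hNed : Nonempty (Fin d) := ⟨⟨0, by omega⟩⟩
  have hub2 : ∀ ω, entropy (νf ω) ≤ (M:ℝ) * Real.log d := by
    intro ω
    set S : Finset (Fin k → Fin d) := Finset.image
      (fun i : Fin M → Fin d => (fun j' : Fin k => W i ω (Fin.castLE hk j')))
      Finset.univ with hSdef
    have hSvan : ∀ y, y ∉ S → νf ω y = 0 := by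
      intro y hy
      simp only [hνf]
      have : ∀ i : Fin M → Fin d,
          (if ∀ j' : Fin k, W i ω (Fin.castLE hk j') = y j' then (1:ℝ) else 0) = 0 := by
        intro i
        rw [if_neg]
        intro hcon
        apply hy
        rw [hSdef]
        refine Finset.mem_image.mpr ⟨i, Finset.mem_univ i, ?_⟩
        funext j'
        exact hcon j'
      rw [Finset.sum_congr rfl (fun i _ => this i)]
      simp
    have h := entropy_le_log_card (νf ω) (hnonneg ω) (hsum1 ω) S hSvan
    refine h.trans ?_
    have hSne : S.Nonempty := by
      rw [hSdef]
      exact Finset.Nonempty.image Finset.univ_nonempty _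
    have hcardS : (S.card : ℝ) ≤ D := by
      rw [← hcardI, hSdef]
      exact_mod_cast Finset.card_image_le
    have := Real.log_le_log (by exact_mod_cast Finset.card_pos.mpr hSne) hcardS
    refine this.trans ?_
    rw [hD, Real.log_pow]
  -- lower bound, dense case
  have hlowA : k ≤ M → (k:ℝ) * Real.log d - ((d:ℝ) ^ (M - k))⁻¹ ≤ E := by
    intro hkM
    set m : ℝ := D * p with hm
    have hm0 : (0:ℝ) < m := by rw [hm]; positivity
    set c1 : ℝ := Real.log D - Real.log m + 1 with hc1
    have hy : ∀ y : Fin k → Fin d,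
        c1 * p - (D / m) * (p / D + p ^ 2) ≤ ∫ ω, -(νf ω y * Real.log (νf ω y)) ∂P := by
      intro y
      have hintlhs : Integrable (fun ω => c1 * νf ω y - (D / m) * (νf ω y) ^ 2) P :=
        ((hIntν y).const_mul c1).sub ((hIntν2 y).const_mul (D / m))
      have hpt : ∀ ω, c1 * νf ω y - (D / m) * (νf ω y) ^ 2
          ≤ -(νf ω y * Real.log (νf ω y)) := by
        intro ω
        have := ineqA D m (νf ω y) hD0 hm0 (hnonneg ω y)
        rw [hc1]
        linarith [this]
      have hmono := integral_mono hintlhs (hIntnl y) hpt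
      rw [integral_sub ((hIntν y).const_mul c1) ((hIntν2 y).const_mul (D / m)),
        integral_const_mul, integral_const_mul, hS1 y] at hmono
      have hDm : (0:ℝ) ≤ D / m := by positivity
      have := mul_le_mul_of_nonneg_left (hS2 y) hDm
      linarith
    have hsumlow : ((d:ℝ) ^ k) * (c1 * p - (D / m) * (p / D + p ^ 2)) ≤ E := by
      rw [hEν]
      calc ((d:ℝ) ^ k) * (c1 * p - (D / m) * (p / D + p ^ 2))
          = ∑ _y : Fin k → Fin d, (c1 * p - (D / m) * (p / D + p ^ 2)) := by
            rw [Finset.sum_const, nsmul_eq_mul, hcardY]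
        _ ≤ ∑ y : Fin k → Fin d, ∫ ω, -(νf ω y * Real.log (νf ω y)) ∂P :=
            Finset.sum_le_sum (fun y _ => hy y)
    refine le_trans (le_of_eq ?_) hsumlow
    have hlogD : Real.log D = (M:ℝ) * Real.log d := by rw [hD, Real.log_pow]
    have hlogm : Real.log m = (M:ℝ) * Real.log d - (k:ℝ) * Real.log d := by
      rw [hm, Real.log_mul (ne_of_gt hD0) (ne_of_gt hp0), hlogD, hp, Real.log_inv,
        Real.log_pow]
      ring
    have hc1' : c1 = (k:ℝ) * Real.log d + 1 := by
      rw [hc1, hlogD, hlogm]; ring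
    have hMk : (d:ℝ) ^ M = (d:ℝ) ^ (M - k) * (d:ℝ) ^ k := by
      rw [← pow_add]; congr 1; omega
    rw [hc1', hm, hp, hD, hMk]
    have hdk0 : ((d:ℝ) ^ k) ≠ 0 := by positivity
    have hdMk0 : ((d:ℝ) ^ (M - k)) ≠ 0 := by positivity
    field_simp
    ring
  -- lower bound, sparse case
  have hlowB : M < k → (M:ℝ) * Real.log d - Real.log 2 * ((d:ℝ) ^ (k - M))⁻¹ ≤ E := by
    intro hMk
    have hy : ∀ y : Fin k → Fin d,
        Real.log D * p + Real.log 2 * (p - D * (p / D + p ^ 2))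
          ≤ ∫ ω, -(νf ω y * Real.log (νf ω y)) ∂P := by
      intro y
      have h1' : Integrable (fun ω => Real.log D * νf ω y) P := (hIntν y).const_mul _
      have h2'' : Integrable (fun ω => νf ω y - D * (νf ω y) ^ 2) P := by
        exact (hIntν y).sub ((hIntν2 y).const_mul D)
      have h2' : Integrable (fun ω => Real.log 2 * (νf ω y - D * (νf ω y) ^ 2)) P := by
        exact h2''.const_mul _
      have hintlhs : Integrable
          (fun ω => Real.log D * νf ω y + Real.log 2 * (νf ω y - D * (νf ω y) ^ 2)) P := by
        exact h1'.add h2'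
      have hpt : ∀ ω, Real.log D * νf ω y + Real.log 2 * (νf ω y - D * (νf ω y) ^ 2)
          ≤ -(νf ω y * Real.log (νf ω y)) := by
        intro ω
        obtain ⟨c, hc⟩ := hNat ω y
        rw [hc]
        have := ineqB D c hD0
        linarith [this]
      have hmono := integral_mono hintlhs (hIntnl y) hpt
      rw [integral_add h1' h2', integral_const_mul, integral_const_mul,
        integral_sub (hIntν y) ((hIntν2 y).const_mul D), integral_const_mul,
        hS1 y] at hmono
      have hlog2 : (0:ℝ) ≤ Real.log 2 := Real.log_nonneg (by norm_num)
      have h2 := mul_le_mul_of_nonneg_left (mul_le_mul_of_nonneg_left (hS2 y)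
        (le_of_lt hD0)) hlog2
      nlinarith [hmono, h2]
    have hsumlow : ((d:ℝ) ^ k) * (Real.log D * p + Real.log 2 * (p - D * (p / D + p ^ 2)))
        ≤ E := by
      rw [hEν]
      calc ((d:ℝ) ^ k) * (Real.log D * p + Real.log 2 * (p - D * (p / D + p ^ 2)))
          = ∑ _y : Fin k → Fin d,
              (Real.log D * p + Real.log 2 * (p - D * (p / D + p ^ 2))) := by
            rw [Finset.sum_const, nsmul_eq_mul, hcardY]
        _ ≤ ∑ y : Fin k → Fin d, ∫ ω, -(νf ω y * Real.log (νf ω y)) ∂P :=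
            Finset.sum_le_sum (fun y _ => hy y)
    refine le_trans (le_of_eq ?_) hsumlow
    have hlogD : Real.log D = (M:ℝ) * Real.log d := by rw [hD, Real.log_pow]
    have hkM' : (d:ℝ) ^ k = (d:ℝ) ^ (k - M) * (d:ℝ) ^ M := by
      rw [← pow_add]; congr 1; omega
    rw [hlogD, hp, hD, hkM']
    have hdM0 : ((d:ℝ) ^ M) ≠ 0 := by positivity
    have hdkM0 : ((d:ℝ) ^ (k - M)) ≠ 0 := by positivity
    field_simp
    ring
  
  -- final assembly
  refine ⟨fun hkM => ⟨?_, ?_⟩, fun hMk => ⟨?_, ?_⟩⟩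
  · -- dense lower bound
    rw [one_div, inv_mul_eq_div, le_div_iff₀ hlogd]
    set t : ℝ := (d:ℝ) ^ (((k:ℝ) - M) / 2) with ht
    have ht0 : 0 < t := Real.rpow_pos_of_pos hd0R _
    have hkMr : (k:ℝ) ≤ (M:ℝ) := by exact_mod_cast hkM
    have ht1 : t ≤ 1 := Real.rpow_le_one_of_one_le_of_nonpos (le_of_lt hd1R)
      (by linarith)
    have htt : t * t = ((d:ℝ) ^ (M - k))⁻¹ := by
      rw [ht, ← Real.rpow_add hd0R]
      have hexp : ((k:ℝ) - M) / 2 + ((k:ℝ) - M) / 2 = -(((M - k : ℕ) : ℝ)) := by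
        have : ((M - k : ℕ) : ℝ) = (M:ℝ) - k := by
          push_cast [Nat.cast_sub hkM]; ring
        rw [this]; ring
      rw [hexp, Real.rpow_neg (le_of_lt hd0R), Real.rpow_natCast]
    have hlog1 : 1 ≤ 2 * Real.log d := by
      have h2 := Real.log_two_gt_d9
      linarith [hlog2d]
    have hA := hlowA hkM
    nlinarith [mul_nonneg (sub_nonneg.mpr hlog1) ht0.le,
      mul_nonneg ht0.le (sub_nonneg.mpr ht1), htt, hA]
  · -- dense upper bound
    rw [one_div, inv_mul_eq_div, div_le_iff₀ hlogd]
    exact hEup _ hub1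
  · -- sparse lower bound
    rw [one_div, inv_mul_eq_div, le_div_iff₀ hlogd]
    set s' : ℝ := (d:ℝ) ^ ((M:ℝ) - k) with hs'
    have hs0 : 0 < s' := Real.rpow_pos_of_pos hd0R _
    have hseq : s' = ((d:ℝ) ^ (k - M))⁻¹ := by
      rw [hs']
      have hexp : (M:ℝ) - k = -(((k - M : ℕ) : ℝ)) := by
        have : ((k - M : ℕ) : ℝ) = (k:ℝ) - M := by
          push_cast [Nat.cast_sub (le_of_lt hMk)]; ring
        rw [this]; ring
      rw [hexp, Real.rpow_neg (le_of_lt hd0R), Real.rpow_natCast]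
    have hB := hlowB hMk
    rw [← hseq] at hB
    nlinarith [mul_le_mul_of_nonneg_right hlog2d hs0.le, hB]
  · -- sparse upper bound
    rw [one_div, inv_mul_eq_div, div_le_iff₀ hlogd]
    exact hEup _ hub2
end

section
/- Let d ≥ 2, and let λ be a probability measure on [0,1] invariant under t ↦ 1−t; set c^N_k := ∫_{[0,1]} t^k (1−t)^{N−k} λ(dt). Let x ∈ (0,1), α := d^{1/2} and, for each N, M := ⌊xN⌋. Then there exists a constant C > 0 such that for all N ≥ 1, ∑_{k=0}^N C(N,k) c^N_k α^{−|k−M|} ≤ C/√N. -/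
set_option maxHeartbeats 2000000
open Real Stirling


open MeasureTheory

/-- The coefficients `c^N_k = ∫ t^k (1−t)^{N−k} λ(dt)`. -/
noncomputable def cNk (lam : Measure ℝ) (N k : ℕ) : ℝ :=
  ∫ t, t ^ k * (1 - t) ^ (N - k) ∂lam



-- AM-GM lemma
lemma amgm (k m : ℕ) (hk : 1 ≤ k) (hm : 1 ≤ m) {t : ℝ} (ht0 : 0 ≤ t) (ht1 : t ≤ 1) :
    t ^ k * (1 - t) ^ m ≤ ((k:ℝ)/(k+m)) ^ k * ((m:ℝ)/(k+m)) ^ m := by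
  have hkp : (0:ℝ) < k := by exact_mod_cast hk
  have hmp : (0:ℝ) < m := by exact_mod_cast hm
  have hNp : (0:ℝ) < (k:ℝ) + m := by linarith
  set p₁ : ℝ := t * ((k:ℝ)+m) / k with hp₁
  set p₂ : ℝ := (1-t) * ((k:ℝ)+m) / m with hp₂
  have hp₁0 : 0 ≤ p₁ := by positivity
  have hp₂0 : 0 ≤ p₂ := by
    have : (0:ℝ) ≤ 1 - t := by linarith
    positivity
  have hgm := Real.geom_mean_le_arith_mean2_weighted
    (le_of_lt (div_pos hkp hNp)) (le_of_lt (div_pos hmp hNp)) hp₁0 hp₂0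
    (by field_simp)
  have hsum : (k:ℝ)/((k:ℝ)+m) * p₁ + (m:ℝ)/((k:ℝ)+m) * p₂ = 1 := by
    rw [hp₁, hp₂]; field_simp; ring
  rw [hsum] at hgm
  -- raise to power (k+m)
  have hN : (0:ℝ) ≤ ((k:ℝ)+m) := le_of_lt hNp
  have hbase : 0 ≤ p₁ ^ ((k:ℝ)/((k:ℝ)+m)) * p₂ ^ ((m:ℝ)/((k:ℝ)+m)) := by positivity
  have hpow := Real.rpow_le_rpow hbase hgm hN
  have e1 : (k:ℝ)/((k:ℝ)+m) * ((k:ℝ)+m) = (k:ℝ) := by field_simp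
  have e2 : (m:ℝ)/((k:ℝ)+m) * ((k:ℝ)+m) = (m:ℝ) := by field_simp
  rw [Real.one_rpow, Real.mul_rpow (by positivity) (by positivity),
    ← Real.rpow_mul hp₁0, ← Real.rpow_mul hp₂0, e1, e2,
    Real.rpow_natCast, Real.rpow_natCast] at hpow
  have key : t ^ k * (1-t) ^ m
      = (p₁ ^ k * p₂ ^ m) * (((k:ℝ)/((k:ℝ)+m)) ^ k * ((m:ℝ)/((k:ℝ)+m)) ^ m) := by
    have c1 : p₁ * ((k:ℝ)/((k:ℝ)+m)) = t := by rw [hp₁]; field_simp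
    have c2 : p₂ * ((m:ℝ)/((k:ℝ)+m)) = 1 - t := by rw [hp₂]; field_simp
    calc t ^ k * (1-t) ^ m = (p₁ * ((k:ℝ)/((k:ℝ)+m))) ^ k * (p₂ * ((m:ℝ)/((k:ℝ)+m))) ^ m := by
          rw [c1, c2]
      _ = _ := by rw [mul_pow, mul_pow]; ring
  rw [key]
  calc (p₁ ^ k * p₂ ^ m) * (((k:ℝ)/((k:ℝ)+m)) ^ k * ((m:ℝ)/((k:ℝ)+m)) ^ m)
      ≤ 1 * (((k:ℝ)/((k:ℝ)+m)) ^ k * ((m:ℝ)/((k:ℝ)+m)) ^ m) :=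
        mul_le_mul_of_nonneg_right hpow (by positivity)
    _ = _ := one_mul _


lemma stirling_ge (n : ℕ) (hn : 1 ≤ n) : √π ≤ stirlingSeq n := by
  obtain ⟨m, rfl⟩ := Nat.exists_eq_add_of_le hn
  have h := stirlingSeq'_antitone
  have ht : Filter.Tendsto (stirlingSeq ∘ Nat.succ) Filter.atTop (nhds (√π)) :=
    tendsto_stirlingSeq_sqrt_pi.comp (Filter.tendsto_add_atTop_nat 1)
  have := h.le_of_tendsto ht m
  simpa [Nat.succ_eq_add_one, Nat.add_comm] using this

lemma stirling_le (n : ℕ) (hn : 1 ≤ n) : stirlingSeq n ≤ exp 1 / √2 := by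
  obtain ⟨m, rfl⟩ := Nat.exists_eq_add_of_le hn
  have := stirlingSeq'_antitone (Nat.zero_le m)
  simpa [Nat.succ_eq_add_one, Nat.add_comm, stirlingSeq_one] using this

lemma factorial_lower (n : ℕ) (hn : 1 ≤ n) :
    √π * (√(2*n) * ((n:ℝ)/exp 1) ^ n) ≤ (Nat.factorial n : ℝ) := by
  have h := stirling_ge n hn
  have hd : 0 < √(2*(n:ℝ)) * ((n:ℝ)/exp 1) ^ n := by
    have : (0:ℝ) < n := by exact_mod_cast hn
    positivity
  rw [stirlingSeq, le_div_iff₀ hd] at h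
  linarith [h]

lemma factorial_upper (n : ℕ) (hn : 1 ≤ n) :
    (Nat.factorial n : ℝ) ≤ (exp 1 / √2) * (√(2*n) * ((n:ℝ)/exp 1) ^ n) := by
  have h := stirling_le n hn
  have hd : 0 < √(2*(n:ℝ)) * ((n:ℝ)/exp 1) ^ n := by
    have : (0:ℝ) < n := by exact_mod_cast hn
    positivity
  rw [stirlingSeq, div_le_iff₀ hd] at h
  linarith [h]

lemma choose_bound (k m : ℕ) (hk : 1 ≤ k) (hm : 1 ≤ m) :
    ((k+m).choose k : ℝ) * (((k:ℝ)/((k:ℝ)+m))^k * ((m:ℝ)/((k:ℝ)+m))^m)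
      ≤ exp 1 * √((k:ℝ)+m) / (2*π*√((k:ℝ)*m)) := by
  have hkp : (0:ℝ) < k := by exact_mod_cast hk
  have hmp : (0:ℝ) < m := by exact_mod_cast hm
  have hNp : (0:ℝ) < (k:ℝ)+m := by linarith
  have hE : (0:ℝ) < exp 1 := exp_pos 1
  have hcast : ((k+m).choose k : ℝ)
      = (Nat.factorial (k+m) : ℝ)/((Nat.factorial k : ℝ) * (Nat.factorial m : ℝ)) := by
    rw [Nat.cast_choose ℝ (Nat.le_add_right k m)]
    simp
  have hLk := factorial_lower k hk
  have hLm := factorial_lower m hm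
  have hU := factorial_upper (k+m) (by omega)
  have hcastN : ((k:ℝ)+m) = ((k+m : ℕ) : ℝ) := by push_cast; ring
  have hLkpos : 0 < √π * (√(2*(k:ℝ)) * ((k:ℝ)/exp 1)^k) := by
    have := pi_pos; positivity
  have hLmpos : 0 < √π * (√(2*(m:ℝ)) * ((m:ℝ)/exp 1)^m) := by
    have := pi_pos; positivity
  have hchoose : ((k+m).choose k : ℝ)
      ≤ (exp 1/√2) * (√(2*((k:ℝ)+m)) * (((k:ℝ)+m)/exp 1)^(k+m))
        / ((√π * (√(2*(k:ℝ)) * ((k:ℝ)/exp 1)^k)) * (√π * (√(2*(m:ℝ)) * ((m:ℝ)/exp 1)^m))) := by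
    rw [hcast]
    rw [hcastN] at *
    gcongr <;> first | exact hLk | exact hLm | exact hU
  have merge : (((k:ℝ)+m)/exp 1)^(k+m) * (((k:ℝ)/((k:ℝ)+m))^k * ((m:ℝ)/((k:ℝ)+m))^m)
      = ((k:ℝ)/exp 1)^k * ((m:ℝ)/exp 1)^m := by
    have c1 : ((k:ℝ)+m)/exp 1 * ((k:ℝ)/((k:ℝ)+m)) = (k:ℝ)/exp 1 := by field_simp
    have c2 : ((k:ℝ)+m)/exp 1 * ((m:ℝ)/((k:ℝ)+m)) = (m:ℝ)/exp 1 := by field_simp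
    calc (((k:ℝ)+m)/exp 1)^(k+m) * (((k:ℝ)/((k:ℝ)+m))^k * ((m:ℝ)/((k:ℝ)+m))^m)
        = (((k:ℝ)+m)/exp 1 * ((k:ℝ)/((k:ℝ)+m)))^k * (((k:ℝ)+m)/exp 1 * ((m:ℝ)/((k:ℝ)+m)))^m := by
          rw [pow_add, mul_pow, mul_pow]; ring
      _ = _ := by rw [c1, c2]
  have hQ0 : 0 ≤ (((k:ℝ)/((k:ℝ)+m))^k * ((m:ℝ)/((k:ℝ)+m))^m) := by positivity
  calc ((k+m).choose k : ℝ) * (((k:ℝ)/((k:ℝ)+m))^k * ((m:ℝ)/((k:ℝ)+m))^m)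
      ≤ ((exp 1/√2) * (√(2*((k:ℝ)+m)) * (((k:ℝ)+m)/exp 1)^(k+m))
        / ((√π * (√(2*(k:ℝ)) * ((k:ℝ)/exp 1)^k)) * (√π * (√(2*(m:ℝ)) * ((m:ℝ)/exp 1)^m))))
        * (((k:ℝ)/((k:ℝ)+m))^k * ((m:ℝ)/((k:ℝ)+m))^m) :=
        mul_le_mul_of_nonneg_right hchoose hQ0
    _ = exp 1 * √((k:ℝ)+m) / (2*π*√((k:ℝ)*m)) := by
        rw [div_mul_eq_mul_div, mul_assoc, mul_assoc (√(2 * ((k:ℝ)+(m:ℝ)))), merge]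
        rw [Real.sqrt_mul (by norm_num : (0:ℝ) ≤ 2) ((k:ℝ)+m),
          Real.sqrt_mul (by norm_num : (0:ℝ) ≤ 2) (k:ℝ),
          Real.sqrt_mul (by norm_num : (0:ℝ) ≤ 2) (m:ℝ),
          Real.sqrt_mul hkp.le (m:ℝ)]
        have hπ : √π * √π = π := Real.mul_self_sqrt pi_pos.le
        have h2 : √2 * √2 = 2 := Real.mul_self_sqrt (by norm_num)
        have hsk : (0:ℝ) < √k := Real.sqrt_pos.2 hkp
        have hsm : (0:ℝ) < √m := Real.sqrt_pos.2 hmp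
        have hsπ : (0:ℝ) < √π := Real.sqrt_pos.2 pi_pos
        have hs2 : (0:ℝ) < √2 := Real.sqrt_pos.2 (by norm_num)
        have hPk : (0:ℝ) < ((k:ℝ)/exp 1)^k := by positivity
        have hPm : (0:ℝ) < ((m:ℝ)/exp 1)^m := by positivity
        rw [div_eq_div_iff (by positivity) (by positivity)]
        field_simp
        set C : ℝ := exp 1 * √2 * √((k:ℝ)+(m:ℝ)) * (k:ℝ)^k * (m:ℝ)^m * √(k:ℝ) * √(m:ℝ)
          * Real.exp (k:ℝ) * Real.exp (m:ℝ) with hC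
        first
        | linear_combination (-C*√2*√2) * hπ + (-C*π) * h2
        | linear_combination (C*√2*√2) * hπ + (C*π) * h2
        | linear_combination (-C*√2*√2) * hπ + (C*π) * h2
        | linear_combination (C*√2*√2) * hπ + (-C*π) * h2
        | linear_combination (-√2*√2) * hπ + (-π) * h2


lemma geom_partial (r : ℝ) (h0 : 0 ≤ r) (h1 : r < 1) (n : ℕ) :
    ∑ j ∈ Finset.range n, r ^ j ≤ (1 - r)⁻¹ := by
  have hne : (1:ℝ) - r ≠ 0 := by linarith
  have h : ∑ j ∈ Finset.range n, r ^ j = (1 - r ^ n) / (1 - r) := by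
    rw [geom_sum_eq (by linarith) n]
    rw [div_eq_div_iff (by intro hc; apply hne; linarith) hne]
    ring
  rw [h, inv_eq_one_div]
  have hrn : 0 ≤ r ^ n := pow_nonneg h0 n
  gcongr
  · linarith

lemma sum_alpha (α : ℝ) (hα : 1 < α) (N M : ℕ) :
    ∑ k ∈ Finset.range (N+1), α ^ (-|(k:ℝ) - (M:ℝ)|) ≤ 2 / (1 - α⁻¹) := by
  have hα0 : (0:ℝ) < α := by linarith
  have hr0 : 0 ≤ α⁻¹ := by positivity
  have hr1 : α⁻¹ < 1 := inv_lt_one_of_one_lt₀ hα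
  set r := α⁻¹ with hr
  -- each term equals r ^ (dist k M)
  have hterm : ∀ k : ℕ, α ^ (-|(k:ℝ) - (M:ℝ)|) = r ^ (if k ≤ M then M - k else k - M) := by
    intro k
    by_cases h : k ≤ M
    · have : |(k:ℝ) - (M:ℝ)| = ((M - k : ℕ) : ℝ) := by
        rw [abs_sub_comm, abs_of_nonneg (by exact_mod_cast sub_nonneg.2 (by exact_mod_cast h : (k:ℝ) ≤ M))]
        push_cast [h]; ring
      rw [if_pos h, this, Real.rpow_neg hα0.le, Real.rpow_natCast, ← inv_pow]
    · have h' : M ≤ k := le_of_not_ge h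
      have : |(k:ℝ) - (M:ℝ)| = ((k - M : ℕ) : ℝ) := by
        rw [abs_of_nonneg (by exact_mod_cast sub_nonneg.2 (by exact_mod_cast h' : (M:ℝ) ≤ k))]
        push_cast [h']; ring
      rw [if_neg h, this, Real.rpow_neg hα0.le, Real.rpow_natCast, ← inv_pow]
  calc ∑ k ∈ Finset.range (N+1), α ^ (-|(k:ℝ) - (M:ℝ)|)
      = ∑ k ∈ Finset.range (N+1), r ^ (if k ≤ M then M - k else k - M) := by
        exact Finset.sum_congr rfl fun k _ => hterm k
    _ = (∑ k ∈ (Finset.range (N+1)).filter (fun k => k ≤ M), r ^ (M - k))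
        + ∑ k ∈ (Finset.range (N+1)).filter (fun k => ¬ k ≤ M), r ^ (k - M) := by
        rw [← Finset.sum_filter_add_sum_filter_not (Finset.range (N+1)) (fun k => k ≤ M)]
        congr 1
        · exact Finset.sum_congr rfl fun k hk => by
            rw [if_pos (Finset.mem_filter.1 hk).2]
        · exact Finset.sum_congr rfl fun k hk => by
            rw [if_neg (Finset.mem_filter.1 hk).2]
    _ ≤ (1 - r)⁻¹ + (1 - r)⁻¹ := by
        gcongr ?_ + ?_
        · calc ∑ k ∈ (Finset.range (N+1)).filter (fun k => k ≤ M), r ^ (M - k)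
              = ∑ j ∈ ((Finset.range (N+1)).filter (fun k => k ≤ M)).image (fun k => M - k), r ^ j := by
                rw [Finset.sum_image]
                intro a ha b hb hab
                have ha' := (Finset.mem_filter.1 ha).2
                have hb' := (Finset.mem_filter.1 hb).2
                simp only at hab; omega
            _ ≤ ∑ j ∈ Finset.range (M+1), r ^ j := by
                apply Finset.sum_le_sum_of_subset_of_nonneg
                · intro j hj
                  simp only [Finset.mem_image, Finset.mem_filter] at hj
                  obtain ⟨a, ⟨_, ha⟩, rfl⟩ := hj
                  exact Finset.mem_range.2 (by omega)
                · intro j _ _; positivity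
            _ ≤ (1 - r)⁻¹ := geom_partial r hr0 hr1 (M+1)
        · calc ∑ k ∈ (Finset.range (N+1)).filter (fun k => ¬ k ≤ M), r ^ (k - M)
              = ∑ j ∈ ((Finset.range (N+1)).filter (fun k => ¬ k ≤ M)).image (fun k => k - M), r ^ j := by
                rw [Finset.sum_image]
                intro a ha b hb hab
                have ha' := (Finset.mem_filter.1 ha).2
                have hb' := (Finset.mem_filter.1 hb).2
                simp only at hab; omega
            _ ≤ ∑ j ∈ Finset.range (N+2), r ^ j := by
                apply Finset.sum_le_sum_of_subset_of_nonneg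
                · intro j hj
                  simp only [Finset.mem_image, Finset.mem_filter, Finset.mem_range] at hj
                  obtain ⟨a, ⟨ha, _⟩, rfl⟩ := hj
                  exact Finset.mem_range.2 (by omega)
                · intro j _ _; positivity
            _ ≤ (1 - r)⁻¹ := geom_partial r hr0 hr1 (N+2)
    _ = 2 / (1 - r) := by ring



-- pointwise binomial bound by 1
lemma pt_le_one (N k : ℕ) (hk : k ≤ N) {t : ℝ} (ht0 : 0 ≤ t) (ht1 : t ≤ 1) :
    (N.choose k : ℝ) * (t ^ k * (1 - t) ^ (N - k)) ≤ 1 := by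
  have h1t : 0 ≤ 1 - t := by linarith
  calc (N.choose k : ℝ) * (t ^ k * (1 - t) ^ (N - k))
      = t ^ k * (1-t) ^ (N-k) * (N.choose k : ℝ) := by ring
    _ ≤ ∑ j ∈ Finset.range (N+1), t ^ j * (1-t) ^ (N-j) * (N.choose j : ℝ) :=
        Finset.single_le_sum (f := fun j => t ^ j * (1-t) ^ (N-j) * (N.choose j : ℝ))
          (fun j _ => by positivity) (Finset.mem_range.2 (Nat.lt_succ_of_le hk))
    _ = (t + (1-t)) ^ N := (add_pow t (1-t) N).symm
    _ = 1 := by norm_num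

-- integral bound
lemma integral_bound (lam : Measure ℝ) [IsProbabilityMeasure lam]
    (h2 : lam (Set.Icc (0:ℝ) 1)ᶜ = 0) (N k : ℕ) (hk : k ≤ N) {B : ℝ}
    (hbound : ∀ t ∈ Set.Icc (0:ℝ) 1, (N.choose k : ℝ) * (t ^ k * (1 - t) ^ (N - k)) ≤ B) :
    (N.choose k : ℝ) * cNk lam N k ≤ B := by
  have hc : (0:ℝ) < (N.choose k : ℝ) := by exact_mod_cast Nat.choose_pos hk
  have hae : ∀ᵐ t ∂lam, t ∈ Set.Icc (0:ℝ) 1 := by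
    rw [MeasureTheory.ae_iff]
    exact h2
  have hB : 0 ≤ B := by
    have hb := hbound (1/2) ⟨by norm_num, by norm_num⟩
    have h12 : (1:ℝ) - 1/2 = 1/2 := by norm_num
    rw [h12] at hb
    have hpos : 0 < (N.choose k : ℝ) * ((1/2:ℝ) ^ k * (1/2:ℝ) ^ (N - k)) := by positivity
    linarith
  have hnorm : ∀ᵐ t ∂lam, ‖t ^ k * (1 - t) ^ (N - k)‖ ≤ B / (N.choose k : ℝ) := by
    filter_upwards [hae] with t ht
    obtain ⟨ht0, ht1⟩ := ht
    have h1t : (0:ℝ) ≤ 1 - t := by linarith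
    rw [Real.norm_eq_abs, abs_of_nonneg (by positivity)]
    rw [le_div_iff₀ hc, mul_comm]
    exact hbound t ⟨ht0, ht1⟩
  have := MeasureTheory.norm_integral_le_of_norm_le_const (μ := lam)
    (f := fun t => t ^ k * (1 - t) ^ (N - k)) hnorm
  simp only [probReal_univ, mul_one] at this
  have h2' : cNk lam N k ≤ B / (N.choose k : ℝ) :=
    (le_abs_self _).trans (by simpa [cNk, Real.norm_eq_abs] using this)
  calc (N.choose k : ℝ) * cNk lam N k ≤ (N.choose k : ℝ) * (B / (N.choose k : ℝ)) := by
        exact mul_le_mul_of_nonneg_left h2' hc.le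
    _ = B := by field_simp

lemma cNk_nonneg (lam : Measure ℝ) (h2 : lam (Set.Icc (0:ℝ) 1)ᶜ = 0) (N k : ℕ) :
    0 ≤ cNk lam N k := by
  apply integral_nonneg_of_ae
  have hae : ∀ᵐ t ∂lam, t ∈ Set.Icc (0:ℝ) 1 := by
    rw [MeasureTheory.ae_iff]; exact h2
  filter_upwards [hae] with t ht
  obtain ⟨ht0, ht1⟩ := ht
  have : (0:ℝ) ≤ 1 - t := by linarith
  positivity

lemma pmf_bound (k m : ℕ) (hk : 1 ≤ k) (hm : 1 ≤ m) {t : ℝ} (ht0 : 0 ≤ t) (ht1 : t ≤ 1) :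
    ((k+m).choose k : ℝ) * (t ^ k * (1-t) ^ m)
      ≤ exp 1 * √((k:ℝ)+m) / (2*π*√((k:ℝ)*m)) :=
  (mul_le_mul_of_nonneg_left (amgm k m hk hm ht0 ht1) (by positivity)).trans
    (choose_bound k m hk hm)


/-- for `d ≥ 2`, a probability measure `λ` on `[0,1]` invariant under
`t ↦ 1−t`, `x ∈ (0,1)`, `α = √d` and `M = ⌊xN⌋`, there is `C > 0` with
`∑_{k=0}^N C(N,k) c^N_k α^{−|k−M|} ≤ C/√N` for all `N ≥ 1`. -/
theorem stmt16 (d : ℕ) (hd : 2 ≤ d) (lam : Measure ℝ)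
    (h1 : IsProbabilityMeasure lam) (h2 : lam (Set.Icc (0:ℝ) 1)ᶜ = 0)
    (h3 : Measure.map (fun t : ℝ => 1 - t) lam = lam)
    (x : ℝ) (hx : x ∈ Set.Ioo (0:ℝ) 1) :
    ∃ C : ℝ, 0 < C ∧ ∀ N : ℕ, 1 ≤ N →
      ∑ k ∈ Finset.range (N + 1),
          (N.choose k : ℝ) * cNk lam N k *
            Real.sqrt d ^ (-|(k : ℝ) - (⌊x * N⌋₊ : ℝ)|) ≤
        C / Real.sqrt N := by
  classical
  obtain ⟨hx0, hx1⟩ := hx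
  set α : ℝ := Real.sqrt d with hαdef
  have hα : 1 < α := by
    have h1d : (1:ℝ) < d := by exact_mod_cast (by omega : 1 < d)
    calc (1:ℝ) = √1 := Real.sqrt_one.symm
      _ < α := Real.sqrt_lt_sqrt (by norm_num) h1d
  have hα0 : (0:ℝ) < α := by linarith
  have hinv : α⁻¹ < 1 := inv_lt_one_of_one_lt₀ hα
  have hinv0 : (0:ℝ) < α⁻¹ := by positivity
  set G₀ : ℝ := 2 / (1 - α⁻¹) with hG₀def
  have hG₀ : 0 < G₀ := div_pos (by norm_num) (by linarith)
  set ε : ℝ := min x (1-x) / 2 with hεdef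
  have hε : 0 < ε := div_pos (lt_min hx0 (by linarith)) (by norm_num)
  have hεx : ε ≤ x/2 := by
    have := min_le_left x (1-x); rw [hεdef]; linarith
  have hεx' : ε ≤ (1-x)/2 := by
    have := min_le_right x (1-x); rw [hεdef]; linarith
  set K : ℝ := exp 1 / (2*π*√((x/4)*((1-x)/2))) with hKdef
  have hab : (0:ℝ) < (x/4)*((1-x)/2) := by
    apply mul_pos (by linarith) (by linarith)
  have hK : 0 < K :=
    div_pos (exp_pos 1) (mul_pos (mul_pos two_pos pi_pos) (Real.sqrt_pos.2 hab))
  set ρ : ℝ := α ^ (-ε) with hρdef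
  have hρ0 : 0 < ρ := Real.rpow_pos_of_pos hα0 _
  have hρ1 : ρ < 1 := Real.rpow_lt_one_of_one_lt_of_neg hα (by linarith)
  -- bound for the tail sequence
  have hsum : Summable (fun n : ℕ => (n:ℝ)^2 * ρ^n) := by
    apply summable_pow_mul_geometric_of_norm_lt_one
    rw [Real.norm_eq_abs, abs_of_pos hρ0]; exact hρ1
  have htend : Filter.Tendsto (fun n : ℕ => 2*((n:ℝ)^2 * ρ^n)) Filter.atTop (nhds 0) := by
    have := (hsum.tendsto_atTop_zero).const_mul (2:ℝ)
    simpa using this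
  obtain ⟨B₂, hB₂⟩ := htend.bddAbove_range
  have hB₂le : ∀ n : ℕ, 2*((n:ℝ)^2 * ρ^n) ≤ B₂ := fun n => hB₂ (Set.mem_range_self n)
  have hB₂0 : 0 ≤ B₂ := by have := hB₂le 0; simpa using this
  set N₁ : ℕ := ⌈4/x + 2/(1-x)⌉₊ with hN₁def
  refine ⟨K*G₀ + B₂ + G₀*√(N₁:ℝ) + 1, by positivity, ?_⟩
  intro N hN
  set M : ℕ := ⌊x * N⌋₊ with hMdef
  have hN0 : (0:ℝ) < N := by exact_mod_cast hN
  have hsN : (0:ℝ) < √(N:ℝ) := Real.sqrt_pos.2 hN0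
  -- each coefficient is at most 1
  have hle1 : ∀ k, k ≤ N → (N.choose k : ℝ) * cNk lam N k ≤ 1 := fun k hk =>
    integral_bound lam h2 N k hk (fun t ht => pt_le_one N k hk ht.1 ht.2)
  have hpow0 : ∀ k : ℕ, (0:ℝ) ≤ α ^ (-|(k:ℝ) - (M:ℝ)|) :=
    fun k => (Real.rpow_pos_of_pos hα0 _).le
  by_cases hbig : 4/x + 2/(1-x) ≤ (N:ℝ)
  · -- large N case
    have hxN4 : 4 ≤ x*(N:ℝ) := by
      have h4x : 4/x ≤ (N:ℝ) := by
        have : 0 ≤ 2/(1-x) := div_nonneg (by norm_num) (by linarith)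
        linarith
      calc (4:ℝ) = (4/x)*x := (div_mul_cancel₀ 4 (ne_of_gt hx0)).symm
        _ ≤ (N:ℝ)*x := mul_le_mul_of_nonneg_right h4x hx0.le
        _ = x*N := mul_comm _ _
    have h1xN2 : 2 ≤ (1-x)*(N:ℝ) := by
      have h2x : 2/(1-x) ≤ (N:ℝ) := by
        have : 0 ≤ 4/x := div_nonneg (by norm_num) hx0.le
        linarith
      calc (2:ℝ) = (2/(1-x))*(1-x) := (div_mul_cancel₀ 2 (by linarith : (1:ℝ)-x ≠ 0)).symm
        _ ≤ (N:ℝ)*(1-x) := mul_le_mul_of_nonneg_right h2x (by linarith)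
        _ = (1-x)*N := mul_comm _ _
    have hMle : (M:ℝ) ≤ x*N := Nat.floor_le (by positivity)
    have hMgt : x*N < (M:ℝ) + 1 := Nat.lt_floor_add_one _
    -- per-term bound without filters
    have hterm : ∀ k ∈ Finset.range (N+1),
        (N.choose k : ℝ) * cNk lam N k * α ^ (-|(k:ℝ) - (M:ℝ)|)
        ≤ (K/√(N:ℝ)) * α ^ (-|(k:ℝ) - (M:ℝ)|) + ρ^N := by
      intro k hk
      have hkN' : k ≤ N := by have := Finset.mem_range.1 hk; omega
      by_cases hnearcase : |(k:ℝ) - (M:ℝ)| ≤ ε*N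
      · -- near case
        rw [abs_le] at hnearcase
        obtain ⟨hkl, hku⟩ := hnearcase
        have hεN : ε*(N:ℝ) ≤ (x/2)*(N:ℝ) := mul_le_mul_of_nonneg_right hεx hN0.le
        have hklow : (x/4)*(N:ℝ) ≤ (k:ℝ) := by nlinarith [hMgt, hkl, hxN4]
        have hεN' : ε*(N:ℝ) ≤ ((1-x)/2)*(N:ℝ) := mul_le_mul_of_nonneg_right hεx' hN0.le
        have hkhigh : ((1-x)/2)*(N:ℝ) ≤ (N:ℝ) - (k:ℝ) := by nlinarith [hMle, hku, h1xN2]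
        have hk1 : 1 ≤ k := by
          have : (1:ℝ) ≤ (k:ℝ) := by nlinarith [hklow, hxN4]
          exact_mod_cast this
        have hkltN : k < N := by
          have h1 : (1:ℝ) ≤ (N:ℝ) - (k:ℝ) := by nlinarith [hkhigh, h1xN2]
          have : (k:ℝ) < (N:ℝ) := by linarith
          exact_mod_cast this
        have hmcast : ((N - k : ℕ) : ℝ) = (N:ℝ) - (k:ℝ) := by
          push_cast [Nat.cast_sub hkN']; ring
        have hcoef : (N.choose k : ℝ) * cNk lam N k
            ≤ exp 1 * √(N:ℝ) / (2*π*√((k:ℝ)*((N:ℝ)-(k:ℝ)))) := by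
          apply integral_bound lam h2 N k hkN'
          intro t ht
          have hpm := pmf_bound k (N-k) hk1 (by omega) ht.1 ht.2
          rw [show k + (N - k) = N by omega] at hpm
          rw [hmcast] at hpm
          rw [show (k:ℝ) + ((N:ℝ) - (k:ℝ)) = (N:ℝ) by ring] at hpm
          exact hpm
        have hcoef2 : exp 1 * √(N:ℝ) / (2*π*√((k:ℝ)*((N:ℝ)-(k:ℝ)))) ≤ K/√(N:ℝ) := by
          set sab : ℝ := √((x/4)*((1-x)/2)) with hsabdef
          have hsab0 : 0 < sab := Real.sqrt_pos.2 hab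
          have hsqrtprod : √((x/4)*((1-x)/2))*(N:ℝ) ≤ √((k:ℝ)*((N:ℝ)-(k:ℝ))) := by
            have h1 : (x/4)*((1-x)/2)*(N:ℝ)^2 ≤ (k:ℝ)*((N:ℝ)-(k:ℝ)) := by
              have hmm := mul_le_mul hklow hkhigh
                (mul_nonneg (by linarith) hN0.le)
                (le_trans (mul_nonneg (by linarith) hN0.le) hklow)
              nlinarith [hmm]
            calc √((x/4)*((1-x)/2))*(N:ℝ) = √((x/4)*((1-x)/2)*(N:ℝ)^2) := by
                  rw [Real.sqrt_mul hab.le, Real.sqrt_sq hN0.le]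
              _ ≤ √((k:ℝ)*((N:ℝ)-(k:ℝ))) := Real.sqrt_le_sqrt h1
          have hden0 : (0:ℝ) < 2*π*(√((x/4)*((1-x)/2))*(N:ℝ)) :=
            mul_pos (mul_pos two_pos pi_pos) (mul_pos (Real.sqrt_pos.2 hab) hN0)
          calc exp 1 * √(N:ℝ) / (2*π*√((k:ℝ)*((N:ℝ)-(k:ℝ))))
              ≤ exp 1 * √(N:ℝ) / (2*π*(√((x/4)*((1-x)/2))*(N:ℝ))) := by
                apply div_le_div_of_nonneg_left (by positivity) hden0
                nlinarith [hsqrtprod, pi_pos]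
            _ = K/√(N:ℝ) := by
                rw [hKdef, ← hsabdef]
                have hNsq : (N:ℝ) = √(N:ℝ) * √(N:ℝ) := (Real.mul_self_sqrt hN0.le).symm
                have hs1 : sab ≠ 0 := ne_of_gt hsab0
                have hπ0 := pi_ne_zero
                have hsN' : √(N:ℝ) ≠ 0 := ne_of_gt hsN
                field_simp
                first
                | linear_combination (rexp 1 * 2 * π * sab) * hNsq
                | linear_combination (-(rexp 1 * 2 * π * sab)) * hNsq
                | linear_combination (rexp 1 * π * sab) * hNsq
                | linear_combination (rexp 1 * 2 * π * sab * √(N:ℝ)) * hNsq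
                | nlinarith [hNsq]
        have := mul_le_mul_of_nonneg_right (hcoef.trans hcoef2) (hpow0 k)
        have hρN : (0:ℝ) ≤ ρ^N := (pow_pos hρ0 N).le
        linarith
      · -- far case
        push_neg at hnearcase
        have h1 : (N.choose k : ℝ) * cNk lam N k * α ^ (-|(k:ℝ) - (M:ℝ)|)
            ≤ 1 * α ^ (-|(k:ℝ) - (M:ℝ)|) :=
          mul_le_mul_of_nonneg_right (hle1 k hkN') (hpow0 k)
        rw [one_mul] at h1
        have h2' : α ^ (-|(k:ℝ) - (M:ℝ)|) ≤ α ^ (-(ε*(N:ℝ))) :=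
          Real.rpow_le_rpow_of_exponent_le hα.le (by linarith)
        have h3' : α ^ (-(ε*(N:ℝ))) = ρ^N := by
          rw [hρdef, ← Real.rpow_natCast (α ^ (-ε)) N, ← Real.rpow_mul hα0.le]
          ring_nf
        have h4' : (0:ℝ) ≤ (K/√(N:ℝ)) * α ^ (-|(k:ℝ) - (M:ℝ)|) :=
          mul_nonneg (by positivity) (hpow0 k)
        linarith
    calc ∑ k ∈ Finset.range (N + 1),
          (N.choose k : ℝ) * cNk lam N k * α ^ (-|(k:ℝ) - (M:ℝ)|)
        ≤ ∑ k ∈ Finset.range (N+1), ((K/√(N:ℝ)) * α ^ (-|(k:ℝ) - (M:ℝ)|) + ρ^N) :=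
          Finset.sum_le_sum hterm
      _ = (K/√(N:ℝ)) * (∑ k ∈ Finset.range (N+1), α ^ (-|(k:ℝ) - (M:ℝ)|))
          + ((N:ℝ)+1) * ρ^N := by
          rw [Finset.sum_add_distrib, Finset.sum_const, Finset.card_range,
            nsmul_eq_mul, ← Finset.mul_sum]
          push_cast
          ring
      _ ≤ (K/√(N:ℝ)) * G₀ + B₂/√(N:ℝ) := by
          have hs1 : (K/√(N:ℝ)) * (∑ k ∈ Finset.range (N+1), α ^ (-|(k:ℝ) - (M:ℝ)|))
              ≤ (K/√(N:ℝ)) * G₀ :=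
            mul_le_mul_of_nonneg_left (sum_alpha α hα N M) (by positivity)
          have hs2 : ((N:ℝ)+1) * ρ^N ≤ B₂/√(N:ℝ) := by
            rw [le_div_iff₀ hsN]
            have hsqN : √(N:ℝ) ≤ (N:ℝ) := by
              calc √(N:ℝ) ≤ √((N:ℝ)^2) := Real.sqrt_le_sqrt (by nlinarith)
                _ = (N:ℝ) := Real.sqrt_sq hN0.le
            have hNN : ((N:ℝ)+1) * √(N:ℝ) ≤ 2*(N:ℝ)^2 := by nlinarith
            have hρp : (0:ℝ) ≤ ρ^N := (pow_pos hρ0 N).le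
            calc ((N:ℝ)+1) * ρ^N * √(N:ℝ) = (((N:ℝ)+1) * √(N:ℝ)) * ρ^N := by ring
              _ ≤ (2*(N:ℝ)^2) * ρ^N := mul_le_mul_of_nonneg_right hNN hρp
              _ = 2*((N:ℝ)^2 * ρ^N) := by ring
              _ ≤ B₂ := hB₂le N
          linarith
      _ = (K*G₀ + B₂)/√(N:ℝ) := by ring
      _ ≤ (K*G₀ + B₂ + G₀*√(N₁:ℝ) + 1)/√(N:ℝ) := by
          have h0 : 0 ≤ G₀*√(N₁:ℝ) := by positivity
          first
          | exact (div_le_div_right hsN).mpr (by linarith)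
          | exact (div_le_div_iff_right hsN).mpr (by linarith)
          | exact div_le_div_of_nonneg_right (by linarith) hsN
          | { gcongr ((?_ : ℝ))/√(N:ℝ); linarith }
  · -- small N case
    push_neg at hbig
    have hNN₁ : (N:ℝ) ≤ (N₁:ℝ) := by
      calc (N:ℝ) ≤ 4/x + 2/(1-x) := hbig.le
        _ ≤ (N₁:ℝ) := Nat.le_ceil _
    calc ∑ k ∈ Finset.range (N + 1),
          (N.choose k : ℝ) * cNk lam N k * α ^ (-|(k:ℝ) - (M:ℝ)|)
        ≤ ∑ k ∈ Finset.range (N + 1), α ^ (-|(k:ℝ) - (M:ℝ)|) := by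
          apply Finset.sum_le_sum
          intro k hk
          have hk' : k ≤ N := by
            have := Finset.mem_range.1 hk; omega
          have h := mul_le_mul_of_nonneg_right (hle1 k hk') (hpow0 k)
          simpa using h
      _ ≤ G₀ := sum_alpha α hα N M
      _ ≤ (K*G₀ + B₂ + G₀*√(N₁:ℝ) + 1)/√(N:ℝ) := by
          rw [le_div_iff₀ hsN]
          have hs : √(N:ℝ) ≤ √(N₁:ℝ) := Real.sqrt_le_sqrt hNN₁
          nlinarith [hK, hG₀, hB₂0, Real.sqrt_nonneg (N₁:ℝ), hs]
end
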